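/- For every integer b ≥ 1 and every assignment of chord indices d : Fin b → ℕ in which each d j is odd and d j ≥ 3, there exist a threshold K ∈ ℕ and a value γ ∈ ℕ∞ such that for every k ≥ K (in particular with 2*b*k − 3 ≥ d j for all j, so the chord indices are admissible), the D3 graph G(b*k, b, d) of order 2*b*k has girth equal to γ. That is, for fixed symmetry factor b and fixed chord indices, the girth of the D3 graph of order 2b(k+i) is the same for all i ≥ 0 once k is beyond the threshold. -/

import Mathlib

/-- The chord/successor relation underlying the D3 graph: `y` follows `x` along the
Hamiltonian cycle, or `y` is reached from an odd-labelled `x` by the chord `d j`,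
where `j` is the (unique) index with `x.val ≡ 2*j + 1 (mod 2*b)`. -/
def d3Rel (m b : ℕ) (d : Fin b → ℕ) (x y : ZMod (2 * m)) : Prop :=
  y = x + 1 ∨
    (Odd x.val ∧ ∃ j : Fin b, x.val % (2 * b) = 2 * (j : ℕ) + 1 ∧ y = x + (d j : ZMod (2 * m)))

/-- The D3 graph `G(m, b, d)` of order `2*m` with symmetry factor `b` and
chord indices `d : Fin b → ℕ`: distinct vertices `x y : ZMod (2*m)` are adjacent iff
`y = x + 1`, or `y = x - 1`, or `x` is odd and `y = x + d j` for the unique `j` with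
`x.val ≡ 2*j + 1 (mod 2*b)`, or `y` is odd and `x = y + d j` likewise. -/
def D3Graph (m b : ℕ) (d : Fin b → ℕ) : SimpleGraph (ZMod (2 * m)) where
  Adj x y := x ≠ y ∧ (d3Rel m b d x y ∨ d3Rel m b d y x)
  symm := by
    constructor
    intro x y h
    exact ⟨h.1.symm, h.2.symm⟩
  loopless := by
    constructor
    intro x h
    exact h.1 rfl

open SimpleGraph

section

lemma valMinAbs_unique {m : ℕ} (hm : 0 < m) (z : ZMod (2 * m)) (t : ℤ)
    (h : (t : ZMod (2 * m)) = z) (hb : t.natAbs < m) : z.valMinAbs = t := by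
  haveI : NeZero (2 * m) := ⟨by omega⟩
  have h1 : ((z.valMinAbs - t : ℤ) : ZMod (2 * m)) = 0 := by
    push_cast
    rw [h, sub_self]
  have h2 : (2 * m : ℤ) ∣ z.valMinAbs - t := by
    rwa [ZMod.intCast_zmod_eq_zero_iff_dvd] at h1
  have h3 : z.valMinAbs.natAbs ≤ (2 * m) / 2 := ZMod.natAbs_valMinAbs_le z
  have h5 : (z.valMinAbs - t).natAbs < 2 * m := by
    have := Int.natAbs_sub_le z.valMinAbs t
    omega
  have h6 : z.valMinAbs - t = 0 := by
    by_contra hne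
    have : (2 * m : ℤ) ≤ |z.valMinAbs - t| := Int.le_of_dvd (abs_pos.mpr hne) ((dvd_abs _ _).mpr h2)
    rw [Int.abs_eq_natAbs] at this
    omega
  linarith

variable {b : ℕ} {d : Fin b → ℕ} {D : ℕ}

/-- Shifting a vertex by an integer `e` shifts `valMinAbs` of the difference, if no wraparound. -/
lemma shift_valMinAbs {m' : ℕ} (hm' : 0 < m') (v x : ZMod (2 * m')) (e : ℤ)
    (hbound : (x - v).valMinAbs.natAbs + e.natAbs < m') :
    (x + (e : ZMod (2 * m')) - v).valMinAbs = (x - v).valMinAbs + e := by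
  haveI : NeZero (2 * m') := ⟨by omega⟩
  apply valMinAbs_unique hm'
  · push_cast
    ring
  · have := Int.natAbs_add_le (x - v).valMinAbs e
    omega

/-- Displacement along a `d3Rel` step. -/
lemma relDisp (h3 : ∀ j, 3 ≤ d j) (hD : ∀ j, d j ≤ D) (hD3 : 3 ≤ D)
    {m' : ℕ} (hm' : 0 < m') {v x y : ZMod (2 * m')}
    (hrel : d3Rel m' b d x y)
    (hbound : (x - v).valMinAbs.natAbs + D < m') :
    ∃ e : ℤ, 1 ≤ e ∧ e ≤ D ∧ (y - v).valMinAbs = (x - v).valMinAbs + e := by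
  rcases hrel with h1 | ⟨hodd, j, hj, hy⟩
  · refine ⟨1, le_refl _, by omega, ?_⟩
    rw [h1, show (1 : ZMod (2 * m')) = ((1 : ℤ) : ZMod (2 * m')) by push_cast; rfl]
    exact shift_valMinAbs hm' v x 1 (by simp; omega)
  · refine ⟨(d j : ℤ), by exact_mod_cast Nat.one_le_iff_ne_zero.mpr (by have := h3 j; omega),
      by exact_mod_cast hD j, ?_⟩
    rw [hy, show ((d j : ℕ) : ZMod (2 * m')) = (((d j : ℕ) : ℤ) : ZMod (2 * m')) by push_cast; rfl]
    exact shift_valMinAbs hm' v x (d j) (by simp; have := hD j; omega)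

/-- Stepping along an edge changes `valMinAbs` distance from `v` by at most `D`. -/
lemma adj_bound (h3 : ∀ j, 3 ≤ d j) (hD : ∀ j, d j ≤ D) (hD3 : 3 ≤ D)
    {m' : ℕ} (hm' : 0 < m') {v x y : ZMod (2 * m')}
    (hadj : (D3Graph m' b d).Adj x y)
    (hbound : (x - v).valMinAbs.natAbs + D < m') :
    (y - v).valMinAbs.natAbs ≤ (x - v).valMinAbs.natAbs + D := by
  rcases hadj.2 with hrel | hrel
  · obtain ⟨e, he1, he2, he3⟩ := relDisp h3 hD hD3 hm' hrel hbound
    rw [he3]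
    have := Int.natAbs_add_le (x - v).valMinAbs e
    omega
  · -- d3Rel m' b d y x : x = y + e, so y = x + (-e)
    rcases hrel with h1 | ⟨hodd, j, hj, hx⟩
    · have : y = x + ((-1 : ℤ) : ZMod (2 * m')) := by rw [h1]; push_cast; ring
      rw [this, shift_valMinAbs hm' v x (-1) (by simp only [Int.natAbs_neg, Int.natAbs_one]; omega)]
      have := Int.natAbs_add_le (x - v).valMinAbs (-1)
      omega
    · have : y = x + ((-(d j) : ℤ) : ZMod (2 * m')) := by rw [hx]; push_cast; ring
      rw [this, shift_valMinAbs hm' v x (-(d j)) (by simp only [Int.natAbs_neg, Int.natAbs_natCast]; have := hD j; omega)]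
      have h2 := Int.natAbs_add_le (x - v).valMinAbs (-(d j))
      have h4 := hD j
      omega

end

section
variable {b : ℕ} {d : Fin b → ℕ} {D : ℕ}

lemma val_congr {m : ℕ} (hm : 0 < m) (v x : ZMod (2 * m)) :
    ((x.val : ℤ)) ≡ (v.val : ℤ) + (x - v).valMinAbs [ZMOD (2 * m : ℕ)] := by
  haveI : NeZero (2 * m) := ⟨by omega⟩
  rw [← ZMod.intCast_eq_intCast_iff]
  push_cast
  rw [ZMod.natCast_val, ZMod.natCast_val, ZMod.cast_id, ZMod.cast_id]
  ring

lemma relTransfer (h3 : ∀ j, 3 ≤ d j) (hD : ∀ j, d j ≤ D) (hD3 : 3 ≤ D)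
    {m m' : ℕ} (hm : 0 < m) (hm' : 0 < m') (hbm : b ∣ m) (hbm' : b ∣ m')
    {v x y : ZMod (2 * m')}
    (hx : (x - v).valMinAbs.natAbs + D < m')
    (hrel : d3Rel m' b d x y) :
    d3Rel m b d ((((v.val : ℤ) + (x - v).valMinAbs : ℤ) : ZMod (2 * m)))
                ((((v.val : ℤ) + (y - v).valMinAbs : ℤ) : ZMod (2 * m))) := by
  haveI : NeZero (2 * m) := ⟨by omega⟩
  haveI : NeZero (2 * m') := ⟨by omega⟩
  set s : ℤ := (v.val : ℤ) with hs
  set t : ℤ := (x - v).valMinAbs with ht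
  rcases hrel with h1 | ⟨hodd, j, hj, hy⟩
  · left
    have hty : (y - v).valMinAbs = t + 1 := by
      rw [h1, show (1 : ZMod (2 * m')) = ((1 : ℤ) : ZMod (2 * m')) by push_cast; rfl]
      exact shift_valMinAbs hm' v x 1 (by simp only [Int.natAbs_one]; omega)
    rw [hty]
    push_cast
    ring
  · right
    -- congruences mod 2 and mod 2b
    have hcx : (x.val : ℤ) ≡ s + t [ZMOD (2 * m' : ℕ)] := val_congr hm' v x
    have hcfx : ((((s + t : ℤ) : ZMod (2 * m))).val : ℤ) ≡ s + t [ZMOD (2 * m : ℕ)] := by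
      rw [ZMod.val_intCast]
      exact Int.emod_emod_of_dvd _ dvd_rfl
    have hdvd2 : (2 : ℤ) ∣ ((2 * m' : ℕ) : ℤ) := by push_cast; exact ⟨m', by ring⟩
    have hdvd2m : (2 : ℤ) ∣ ((2 * m : ℕ) : ℤ) := by push_cast; exact ⟨m, by ring⟩
    obtain ⟨c, hc⟩ := hbm
    obtain ⟨c', hc'⟩ := hbm'
    have hdvdb : ((2 * b : ℕ) : ℤ) ∣ ((2 * m' : ℕ) : ℤ) := by
      push_cast; exact ⟨c', by rw [hc']; push_cast; ring⟩
    have hdvdbm : ((2 * b : ℕ) : ℤ) ∣ ((2 * m : ℕ) : ℤ) := by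
      push_cast; exact ⟨c, by rw [hc]; push_cast; ring⟩
    refine ⟨?_, j, ?_, ?_⟩
    · -- oddness
      have e1 : (x.val : ℤ) % 2 = (s + t) % 2 := (hcx.of_dvd hdvd2)
      have e2 : ((((s + t : ℤ) : ZMod (2 * m))).val : ℤ) % 2 = (s + t) % 2 :=
        (hcfx.of_dvd hdvd2m)
      rw [Nat.odd_iff] at hodd ⊢
      omega
    · -- residue mod 2b
      have e1 : (x.val : ℤ) % ((2 * b : ℕ) : ℤ) = (s + t) % ((2 * b : ℕ) : ℤ) :=
        hcx.of_dvd hdvdb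
      have e2 : ((((s + t : ℤ) : ZMod (2 * m))).val : ℤ) % ((2 * b : ℕ) : ℤ)
          = (s + t) % ((2 * b : ℕ) : ℤ) := hcfx.of_dvd hdvdbm
      have e3 : ((x.val % (2 * b) : ℕ) : ℤ) = ((((s + t : ℤ) : ZMod (2 * m))).val % (2 * b) : ℕ) := by
        push_cast at e1 e2 ⊢
        omega
      rw [hj] at e3
      exact_mod_cast e3.symm
    · -- target vertex
      have hty : (y - v).valMinAbs = t + (d j : ℤ) := by
        rw [hy, show ((d j : ℕ) : ZMod (2 * m')) = (((d j : ℕ) : ℤ) : ZMod (2 * m')) by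
          push_cast; rfl]
        exact shift_valMinAbs hm' v x (d j)
          (by simp only [Int.natAbs_natCast]; have := hD j; omega)
      rw [hty]
      push_cast
      ring

lemma adjTransfer (h3 : ∀ j, 3 ≤ d j) (hD : ∀ j, d j ≤ D) (hD3 : 3 ≤ D)
    {m m' : ℕ} (hm : 0 < m) (hm' : 0 < m') (hbm : b ∣ m) (hbm' : b ∣ m')
    {v x y : ZMod (2 * m')}
    (hx : (x - v).valMinAbs.natAbs + D < m')
    (hy : (y - v).valMinAbs.natAbs + D < m')
    (hxm : (x - v).valMinAbs.natAbs + D < m)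
    (hym : (y - v).valMinAbs.natAbs + D < m)
    (hadj : (D3Graph m' b d).Adj x y) :
    (D3Graph m b d).Adj ((((v.val : ℤ) + (x - v).valMinAbs : ℤ) : ZMod (2 * m)))
                        ((((v.val : ℤ) + (y - v).valMinAbs : ℤ) : ZMod (2 * m))) := by
  haveI : NeZero (2 * m) := ⟨by omega⟩
  haveI : NeZero (2 * m') := ⟨by omega⟩
  constructor
  · -- distinctness
    intro heq
    have h2 : ((((x - v).valMinAbs - (y - v).valMinAbs : ℤ)) : ZMod (2 * m)) = 0 := by
      push_cast
      rw [show ((x - v).valMinAbs : ZMod (2 * m)) - ((y - v).valMinAbs : ZMod (2 * m))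
        = (((v.val : ℤ) + (x - v).valMinAbs : ℤ) : ZMod (2 * m))
          - (((v.val : ℤ) + (y - v).valMinAbs : ℤ) : ZMod (2 * m)) by push_cast; ring,
        heq, sub_self]
    rw [ZMod.intCast_zmod_eq_zero_iff_dvd] at h2
    have h5 : ((x - v).valMinAbs - (y - v).valMinAbs).natAbs < 2 * m := by
      have := Int.natAbs_sub_le (x - v).valMinAbs (y - v).valMinAbs
      omega
    have h6 : (x - v).valMinAbs = (y - v).valMinAbs := by
      by_contra hne
      have hne' : (x - v).valMinAbs - (y - v).valMinAbs ≠ 0 := by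
        intro h; exact hne (by linarith)
      have : ((2 * m : ℕ) : ℤ) ≤ |(x - v).valMinAbs - (y - v).valMinAbs| :=
        Int.le_of_dvd (abs_pos.mpr hne') ((dvd_abs _ _).mpr h2)
      rw [Int.abs_eq_natAbs] at this
      have : (2 * m : ℕ) ≤ ((x - v).valMinAbs - (y - v).valMinAbs).natAbs := by exact_mod_cast this
      omega
    apply hadj.1
    have hxy : x - v = y - v := by
      rw [← ZMod.coe_valMinAbs (x - v), ← ZMod.coe_valMinAbs (y - v), h6]
    exact sub_left_injective hxy
  · rcases hadj.2 with hrel | hrel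
    · exact Or.inl (relTransfer h3 hD hD3 hm hm' hbm hbm' hx hrel)
    · exact Or.inr (relTransfer h3 hD hD3 hm hm' hbm hbm' hy hrel)

lemma support_bound (h3 : ∀ j, 3 ≤ d j) (hD : ∀ j, d j ≤ D) (hD3 : 3 ≤ D)
    {m' : ℕ} (hm' : 0 < m') (hm'big : (D + 1) * D + D < m') :
    ∀ {u v : ZMod (2 * m')} (p : (D3Graph m' b d).Walk u v), p.length ≤ D + 1 →
      ∀ x ∈ p.support, (x - v).valMinAbs.natAbs ≤ p.length * D := by
  intro u v p
  induction p with
  | nil =>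
    intro _ x hx
    simp only [SimpleGraph.Walk.support_nil, List.mem_singleton] at hx
    subst hx
    simp
  | @cons u u₂ vv h q ih =>
    intro hlen x hx
    have hqlen : q.length ≤ D + 1 := by
      simp only [SimpleGraph.Walk.length_cons] at hlen; omega
    simp only [SimpleGraph.Walk.support_cons, List.mem_cons] at hx
    rcases hx with rfl | hx
    · have hu2 := ih hqlen u₂ q.start_mem_support
      have hqD : q.length ≤ D := by
        simp only [SimpleGraph.Walk.length_cons] at hlen; omega
      have hmul : q.length * D ≤ D * D := Nat.mul_le_mul_right D hqD
      have hexp : (D + 1) * D = D * D + D := by ring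
      have hb2 : (u₂ - vv).valMinAbs.natAbs + D < m' := by omega
      have hstep := adj_bound h3 hD hD3 hm' h.symm hb2
      simp only [SimpleGraph.Walk.length_cons]
      have hexp2 : (q.length + 1) * D = q.length * D + D := by ring
      omega
    · have := ih hqlen x hx
      simp only [SimpleGraph.Walk.length_cons]
      have hexp2 : (q.length + 1) * D = q.length * D + D := by ring
      omega

/-- Transfer a walk along a map that preserves adjacency on its support. -/
lemma walk_transfer {α β : Type*} {A : SimpleGraph α} {B : SimpleGraph β} (f : α → β) :
    ∀ {u v : α} (w : A.Walk u v),
      (∀ x y, A.Adj x y → x ∈ w.support → y ∈ w.support → B.Adj (f x) (f y)) →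
      ∃ w' : B.Walk (f u) (f v), w'.length = w.length ∧
        w'.support = w.support.map f ∧ w'.edges = w.edges.map (Sym2.map f) := by
  intro u v w
  induction w with
  | nil => intro _; exact ⟨.nil, by simp, by simp, by simp⟩
  | cons h p ih =>
    intro H
    obtain ⟨p', hl, hs, he⟩ := ih (fun x y hxy hx hy =>
      H x y hxy (by simp [hx]) (by simp [hy]))
    refine ⟨.cons (H _ _ h (by simp) (by simp)) p', by simp [hl], by simp [hs], ?_⟩
    simp [he]

/-- Transfer a cycle along a map that preserves adjacency and is injective on its support. -/
lemma cycle_transfer {α β : Type*} {A : SimpleGraph α} {B : SimpleGraph β} (f : α → β)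
    {v : α} (w : A.Walk v v) (hw : w.IsCycle)
    (Hadj : ∀ x y, A.Adj x y → x ∈ w.support → y ∈ w.support → B.Adj (f x) (f y))
    (Hinj : ∀ x ∈ w.support, ∀ y ∈ w.support, f x = f y → x = y) :
    ∃ w' : B.Walk (f v) (f v), w'.IsCycle ∧ w'.length = w.length := by
  obtain ⟨w', hl, hs, he⟩ := walk_transfer f w Hadj
  refine ⟨w', ⟨⟨⟨?_⟩, ?_⟩, ?_⟩, hl⟩
  · rw [he]
    refine List.Nodup.map_on ?_ hw.isCircuit.isTrail.edges_nodup
    intro e1 he1 e2 he2 heq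
    induction e1 with
    | h a b =>
      induction e2 with
      | h c d =>
        simp only [Sym2.map_pair_eq, Sym2.eq_iff] at heq ⊢
        have ha := SimpleGraph.Walk.fst_mem_support_of_mem_edges w he1
        have hb := SimpleGraph.Walk.snd_mem_support_of_mem_edges w he1
        have hc := SimpleGraph.Walk.fst_mem_support_of_mem_edges w he2
        have hd := SimpleGraph.Walk.snd_mem_support_of_mem_edges w he2
        rcases heq with ⟨h1, h2⟩ | ⟨h1, h2⟩
        · exact Or.inl ⟨Hinj _ ha _ hc h1, Hinj _ hb _ hd h2⟩
        · exact Or.inr ⟨Hinj _ ha _ hd h1, Hinj _ hb _ hc h2⟩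
  · intro hnil
    have := hw.three_le_length
    rw [← hl, hnil] at this
    simp at this
  · have : w'.support.tail = w.support.tail.map f := by
      rw [hs]
      cases w.support with
      | nil => simp
      | cons a l => simp
    rw [this]
    refine List.Nodup.map_on ?_ hw.support_nodup
    intro x hx y hy hxy
    exact Hinj x (List.mem_of_mem_tail hx) y (List.mem_of_mem_tail hy) hxy

lemma transfer_cycle (h3 : ∀ j, 3 ≤ d j) (hD : ∀ j, d j ≤ D) (hD3 : 3 ≤ D)
    {m m' : ℕ} (hbm : b ∣ m) (hbm' : b ∣ m')
    (hm : (D + 2) ^ 2 ≤ m) (hm' : (D + 2) ^ 2 ≤ m') {v : ZMod (2 * m')}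
    (w : (D3Graph m' b d).Walk v v) (hw : w.IsCycle) (hlen : w.length ≤ D + 1) :
    ∃ (v'' : ZMod (2 * m)) (w'' : (D3Graph m b d).Walk v'' v''),
      w''.IsCycle ∧ w''.length = w.length := by
  have hsq : (D + 2) ^ 2 = D * D + 4 * D + 4 := by ring
  have hexp : (D + 1) * D = D * D + D := by ring
  have hm0 : 0 < m := by omega
  have hm0' : 0 < m' := by omega
  have hmbig : (D + 1) * D + D < m := by omega
  have hmbig' : (D + 1) * D + D < m' := by omega
  set f : ZMod (2 * m') → ZMod (2 * m) :=
    fun x => (((v.val : ℤ) + (x - v).valMinAbs : ℤ) : ZMod (2 * m)) with hf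
  have hsupp : ∀ x ∈ w.support, (x - v).valMinAbs.natAbs ≤ (D + 1) * D := by
    intro x hx
    have h1 := support_bound h3 hD hD3 hm0' hmbig' w hlen x hx
    have h2 : w.length * D ≤ (D + 1) * D := Nat.mul_le_mul_right D hlen
    omega
  have Hadj : ∀ x y, (D3Graph m' b d).Adj x y → x ∈ w.support → y ∈ w.support →
      (D3Graph m b d).Adj (f x) (f y) := by
    intro x y hxy hx hy
    exact adjTransfer h3 hD hD3 hm0 hm0' hbm hbm'
      (by have := hsupp x hx; omega) (by have := hsupp y hy; omega)
      (by have := hsupp x hx; omega) (by have := hsupp y hy; omega) hxy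
  have Hinj : ∀ x ∈ w.support, ∀ y ∈ w.support, f x = f y → x = y := by
    intro x hx y hy hfeq
    haveI : NeZero (2 * m) := ⟨by omega⟩
    haveI : NeZero (2 * m') := ⟨by omega⟩
    have h2 : ((((x - v).valMinAbs - (y - v).valMinAbs : ℤ)) : ZMod (2 * m)) = 0 := by
      push_cast
      rw [show ((x - v).valMinAbs : ZMod (2 * m)) - ((y - v).valMinAbs : ZMod (2 * m))
        = (((v.val : ℤ) + (x - v).valMinAbs : ℤ) : ZMod (2 * m))
          - (((v.val : ℤ) + (y - v).valMinAbs : ℤ) : ZMod (2 * m)) by push_cast; ring]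
      rw [show ((((v.val : ℤ) + (x - v).valMinAbs : ℤ) : ZMod (2 * m))) = f x from rfl,
        show ((((v.val : ℤ) + (y - v).valMinAbs : ℤ) : ZMod (2 * m))) = f y from rfl, hfeq,
        sub_self]
    rw [ZMod.intCast_zmod_eq_zero_iff_dvd] at h2
    have hbx := hsupp x hx
    have hby := hsupp y hy
    have h5 : ((x - v).valMinAbs - (y - v).valMinAbs).natAbs < 2 * m := by
      have := Int.natAbs_sub_le (x - v).valMinAbs (y - v).valMinAbs
      omega
    have h6 : (x - v).valMinAbs = (y - v).valMinAbs := by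
      by_contra hne
      have hne' : (x - v).valMinAbs - (y - v).valMinAbs ≠ 0 := by
        intro h; exact hne (by linarith)
      have h7 : ((2 * m : ℕ) : ℤ) ≤ |(x - v).valMinAbs - (y - v).valMinAbs| :=
        Int.le_of_dvd (abs_pos.mpr hne') ((dvd_abs _ _).mpr h2)
      rw [Int.abs_eq_natAbs] at h7
      have : (2 * m : ℕ) ≤ ((x - v).valMinAbs - (y - v).valMinAbs).natAbs := by exact_mod_cast h7
      omega
    have hxy : x - v = y - v := by
      rw [← ZMod.coe_valMinAbs (x - v), ← ZMod.coe_valMinAbs (y - v), h6]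
    exact sub_left_injective hxy
  obtain ⟨w', hw', hl⟩ := cycle_transfer f w hw Hadj Hinj
  exact ⟨f v, w', hw', hl⟩

/-- Natural cast is injective below the modulus. -/
lemma natCast_inj_lt {m : ℕ} (hm : 0 < m) {i i' : ℕ} (hi : i < 2 * m) (hi' : i' < 2 * m)
    (h : (i : ZMod (2 * m)) = (i' : ZMod (2 * m))) : i = i' := by
  haveI : NeZero (2 * m) := ⟨by omega⟩
  have := congrArg ZMod.val h
  rwa [ZMod.val_cast_of_lt hi, ZMod.val_cast_of_lt hi'] at this

lemma short_cycle (hb : 1 ≤ b) (h3 : ∀ j, 3 ≤ d j) (hD : ∀ j, d j ≤ D)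
    {m : ℕ} (hm : D + 2 ≤ m) :
    ∃ (v : ZMod (2 * m)) (c : (D3Graph m b d).Walk v v),
      c.IsCycle ∧ c.length = d ⟨0, hb⟩ + 1 := by
  have hD3 : 3 ≤ D := le_trans (h3 ⟨0, hb⟩) (hD ⟨0, hb⟩)
  haveI : Fact (1 < 2 * m) := ⟨by omega⟩
  haveI : NeZero (2 * m) := ⟨by omega⟩
  set j₀ : Fin b := ⟨0, hb⟩ with hj₀
  set n₀ : ℕ := d j₀ with hn₀
  have hn₀3 : 3 ≤ n₀ := h3 j₀
  have hn₀D : n₀ ≤ D := hD j₀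
  set a : ZMod (2 * m) := 1 with ha
  -- adjacency of consecutive vertices
  have hadjc : ∀ i : ℕ, (D3Graph m b d).Adj (a + ((i + 1 : ℕ) : ZMod (2 * m)))
      (a + (i : ZMod (2 * m))) := by
    intro i
    refine ⟨?_, Or.inr (Or.inl ?_)⟩
    · intro h
      have h1 : ((i + 1 : ℕ) : ZMod (2 * m)) = (i : ZMod (2 * m)) := by
        exact add_left_cancel h
      have h2 : ((1 : ℕ) : ZMod (2 * m)) = 0 := by
        push_cast at h1 ⊢
        linear_combination h1
      rw [ZMod.natCast_eq_zero_iff] at h2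
      have := Nat.le_of_dvd one_pos h2
      omega
    · have heq : a + ((i + 1 : ℕ) : ZMod (2 * m)) = (a + (i : ZMod (2 * m))) + 1 := by
        push_cast; ring
      exact heq
  -- the downward walk
  have key : ∀ n : ℕ, n ≤ n₀ →
      ∃ p : (D3Graph m b d).Walk (a + (n : ZMod (2 * m))) a,
        p.length = n ∧
        p.support = ((List.range (n + 1)).reverse).map (fun i : ℕ => a + (i : ZMod (2 * m))) ∧
        ∀ e ∈ p.edges, ∃ i : ℕ, i < n ∧
          e = s(a + ((i + 1 : ℕ) : ZMod (2 * m)), a + (i : ZMod (2 * m))) := by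
    intro n
    induction n with
    | zero =>
      intro _
      refine ⟨SimpleGraph.Walk.nil.copy (by push_cast; ring) rfl, by simp, by rw [show List.range 1 = [0] from rfl]; simp, by simp⟩
    | succ n ih =>
      intro hn
      obtain ⟨p, hl, hs, he⟩ := ih (by omega)
      refine ⟨SimpleGraph.Walk.cons (hadjc n) p, by simp [hl], ?_, ?_⟩
      · rw [SimpleGraph.Walk.support_cons, hs]
        simp [List.range_succ]
      · intro e hee
        rw [SimpleGraph.Walk.edges_cons, List.mem_cons] at hee
        rcases hee with rfl | hee
        · exact ⟨n, by omega, rfl⟩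
        · obtain ⟨i, hi, hie⟩ := he e hee
          exact ⟨i, by omega, hie⟩
  obtain ⟨p, hl, hs, he⟩ := key n₀ le_rfl
  -- injectivity of i ↦ a + i on small indices
  have hinj : ∀ i i' : ℕ, i ≤ n₀ → i' ≤ n₀ →
      a + (i : ZMod (2 * m)) = a + (i' : ZMod (2 * m)) → i = i' := by
    intro i i' hi hi' hii
    exact natCast_inj_lt (by omega) (by omega) (by omega) (add_left_cancel hii)
  -- the chord
  have hchord : (D3Graph m b d).Adj a (a + ((n₀ : ℕ) : ZMod (2 * m))) := by
    refine ⟨?_, Or.inl (Or.inr ⟨?_, j₀, ?_, rfl⟩)⟩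
    · intro h
      have h1 : ((n₀ : ℕ) : ZMod (2 * m)) = 0 := by
        have := h.symm
        nth_rewrite 2 [show a = a + (0 : ZMod (2 * m)) by ring] at this
        exact add_left_cancel this
      rw [ZMod.natCast_eq_zero_iff] at h1
      have := Nat.le_of_dvd (by omega) h1
      omega
    · rw [ha, ZMod.val_one]
      decide
    · rw [ha, ZMod.val_one]
      have : 1 % (2 * b) = 1 := Nat.mod_eq_of_lt (by omega)
      rw [this, hj₀]
      simp
  -- assemble the cycle
  refine ⟨a, SimpleGraph.Walk.cons hchord p, ?_, by simp [hl]⟩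
  rw [SimpleGraph.Walk.cons_isCycle_iff]
  constructor
  · apply SimpleGraph.Walk.IsPath.mk'
    rw [hs]
    refine List.Nodup.map_on ?_ (by simp [List.nodup_reverse, List.nodup_range])
    intro i hi i' hi' hii
    simp only [List.mem_reverse, List.mem_range] at hi hi'
    exact hinj i i' (by omega) (by omega) hii
  · intro hmem
    obtain ⟨i, hi, hie⟩ := he _ hmem
    rw [Sym2.eq_iff] at hie
    rcases hie with ⟨h1, h2⟩ | ⟨h1, h2⟩
    · -- a = a + (i+1)
      have : (0 : ℕ) = i + 1 := by
        apply hinj 0 (i + 1) (by omega) (by omega)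
        simpa using h1
      omega
    · -- a = a + i ∧ a + n₀ = a + (i+1)
      have e1 : (0 : ℕ) = i := by
        apply hinj 0 i (by omega) (by omega)
        simpa using h1
      have e2 : n₀ = i + 1 := by
        apply hinj n₀ (i + 1) le_rfl (by omega)
        exact h2
      omega

lemma egirth_le_of_cycle {α : Type*} {G : SimpleGraph α} {v : α} (w : G.Walk v v)
    (hw : w.IsCycle) : G.egirth ≤ (w.length : ℕ∞) := by
  rw [SimpleGraph.egirth]
  exact (iInf_le _ v).trans ((iInf_le _ w).trans (iInf_le _ hw))

lemma egirth_le_side (hb : 1 ≤ b) (h3 : ∀ j, 3 ≤ d j) (hD : ∀ j, d j ≤ D) (hD3 : 3 ≤ D)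
    {m m' : ℕ} (hbm : b ∣ m) (hbm' : b ∣ m')
    (hm : (D + 2) ^ 2 ≤ m) (hm' : (D + 2) ^ 2 ≤ m') :
    (D3Graph m b d).egirth ≤ (D3Graph m' b d).egirth := by
  have hsq : (D + 2) ^ 2 = D * D + 4 * D + 4 := by ring
  obtain ⟨v0, c0, hc0, hlen0⟩ := short_cycle hb h3 hD (m := m') (by omega)
  have hnot : ¬ (D3Graph m' b d).IsAcyclic := fun h => h _ hc0
  obtain ⟨a, w, hw, hge⟩ := (SimpleGraph.exists_egirth_eq_length).mpr hnot
  have hwle : w.length ≤ D + 1 := by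
    have h1 : (D3Graph m' b d).egirth ≤ (c0.length : ℕ∞) := egirth_le_of_cycle c0 hc0
    rw [hge, hlen0] at h1
    have h2 : w.length ≤ d ⟨0, hb⟩ + 1 := by exact_mod_cast h1
    have := hD ⟨0, hb⟩
    omega
  obtain ⟨v'', w'', hw'', hl''⟩ := transfer_cycle h3 hD hD3 hbm hbm' hm hm' w hw hwle
  calc (D3Graph m b d).egirth ≤ (w''.length : ℕ∞) := egirth_le_of_cycle w'' hw''
    _ = (w.length : ℕ∞) := by rw [hl'']
    _ = (D3Graph m' b d).egirth := hge.symm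

end


/-- For fixed symmetry factor `b ≥ 1` and fixed odd chord indices `d j ≥ 3`, there is a
threshold `K` and a value `γ : ℕ∞` such that for every `k ≥ K` the chord indices are
admissible (`d j ≤ 2*b*k - 3`) and the D3 graph of order `2*b*k` has girth `γ`. -/
theorem stmt_0 (b : ℕ) (hb : 1 ≤ b) (d : Fin b → ℕ)
    (hodd : ∀ j, Odd (d j)) (h3 : ∀ j, 3 ≤ d j) :
    ∃ (K : ℕ) (γ : ℕ∞), ∀ k : ℕ, K ≤ k →
      (∀ j, d j ≤ 2 * b * k - 3) ∧ (D3Graph (b * k) b d).egirth = γ := by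
  classical
  set D : ℕ := Finset.univ.sup d with hDdef
  have hD : ∀ j, d j ≤ D := fun j => Finset.le_sup (Finset.mem_univ j)
  have hD3 : 3 ≤ D := le_trans (h3 ⟨0, hb⟩) (hD ⟨0, hb⟩)
  have hsq : (D + 2) ^ 2 = D * D + 4 * D + 4 := by ring
  refine ⟨(D + 2) ^ 2, (D3Graph (b * (D + 2) ^ 2) b d).egirth, ?_⟩
  intro k hk
  have hbk : (D + 2) ^ 2 ≤ b * k := le_trans hk (Nat.le_mul_of_pos_left k hb)
  have hbK : (D + 2) ^ 2 ≤ b * (D + 2) ^ 2 := Nat.le_mul_of_pos_left _ hb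
  constructor
  · intro j
    have h1 := hD j
    have h2 : 2 * b * k = 2 * (b * k) := by ring
    have h3' : D * D ≥ 3 * D := Nat.mul_le_mul_right D hD3
    omega
  · exact le_antisymm
      (egirth_le_side hb h3 hD hD3 ⟨k, rfl⟩ ⟨(D + 2) ^ 2, rfl⟩ hbk hbK)
      (egirth_le_side hb h3 hD hD3 ⟨(D + 2) ^ 2, rfl⟩ ⟨k, rfl⟩ hbK hbk)
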